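/- arXiv:0907.0299 — 3 statements merged into one kernel-verified Lean document; each statement's English description precedes it below -/
import Mathlib

section
/- Let n ≥ 2 and g_1,…,g_n ∈ ℝ. Define Q : ℝ^n × ℝ^n → ℝ by Q(z,x) = exp(−(g_1 e^{x_1 + z_1} + Σ_{i=1}^{n−1}(e^{z_i − x_i} + g_{i+1} e^{x_{i+1} − z_i}) + e^{z_n − x_n})). Then for all (z,x): (−(1/2) Σ_{i=1}^n ∂²/∂z_i² + 2 g_1 e^{2z_1} + Σ_{i=1}^{n−1} g_{i+1} e^{z_{i+1}−z_i}) Q = (−(1/2) Σ_{i=1}^n ∂²/∂x_i² + g_1 g_2 e^{x_1 + x_2} + Σ_{i=1}^{n−1} g_{i+1} e^{x_{i+1}−x_i}) Q. -/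
set_option maxHeartbeats 1000000


/-- Second partial derivative of `f` along the `i`-th coordinate at the point `p`. -/
noncomputable def pd2 (f : (ℕ → ℝ) → ℝ) (i : ℕ) (p : ℕ → ℝ) : ℝ :=
  deriv (deriv (fun t => f (Function.update p i t))) (p i)

lemma exp_mul_exp (a b c : ℝ) (h : a + b = c) :
    Real.exp a * Real.exp b = Real.exp c := by rw [← Real.exp_add, h]

lemma second_deriv_exp (P M C t : ℝ) :
    deriv (deriv (fun s => Real.exp (P * Real.exp s + M * Real.exp (-s) + C))) t
      = ((P * Real.exp t - M * Real.exp (-t))^2 + (P * Real.exp t + M * Real.exp (-t)))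
        * Real.exp (P * Real.exp t + M * Real.exp (-t) + C) := by
  have hexp : ∀ u : ℝ, HasDerivAt (fun s : ℝ => Real.exp (-s)) (-Real.exp (-u)) u := by
    intro u
    simpa using (hasDerivAt_neg u).exp
  have hinner : ∀ u : ℝ, HasDerivAt (fun s : ℝ => P * Real.exp s + M * Real.exp (-s) + C)
      (P * Real.exp u - M * Real.exp (-u)) u := by
    intro u
    have h1 := (Real.hasDerivAt_exp u).const_mul P
    have h2 := (hexp u).const_mul M
    have h3 := (h1.add h2).add_const C
    exact h3.congr_deriv (by ring)
  have hd : ∀ u : ℝ, HasDerivAt (fun s => Real.exp (P * Real.exp s + M * Real.exp (-s) + C))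
      ((P * Real.exp u - M * Real.exp (-u)) * Real.exp (P * Real.exp u + M * Real.exp (-u) + C)) u := by
    intro u
    have := (hinner u).exp
    convert this using 1
    ring
  have hder : deriv (fun s => Real.exp (P * Real.exp s + M * Real.exp (-s) + C))
      = fun u => (P * Real.exp u - M * Real.exp (-u))
          * Real.exp (P * Real.exp u + M * Real.exp (-u) + C) :=
    funext fun u => (hd u).deriv
  rw [hder]
  have h1 := (Real.hasDerivAt_exp t).const_mul P
  have h2 := (hexp t).const_mul M
  have hmul := (h1.sub h2).mul (hd t)
  have hmul' : HasDerivAt (fun u => (P * Real.exp u - M * Real.exp (-u))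
      * Real.exp (P * Real.exp u + M * Real.exp (-u) + C))
      ((P * Real.exp t - M * -Real.exp (-t)) * Real.exp (P * Real.exp t + M * Real.exp (-t) + C) +
        (P * Real.exp t - M * Real.exp (-t)) *
          ((P * Real.exp t - M * Real.exp (-t)) * Real.exp (P * Real.exp t + M * Real.exp (-t) + C))) t :=
    hmul
  rw [hmul'.deriv]
  ring

lemma pd2_exp_aux2 (f : (ℕ → ℝ) → ℝ) (i : ℕ) (p : ℕ → ℝ) (P M K A B : ℝ)
    (h : ∀ t, f (Function.update p i t) = Real.exp (-(P * Real.exp t + M * Real.exp (-t) + K)))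
    (hA : P * Real.exp (p i) = A) (hB : M * Real.exp (-(p i)) = B) :
    pd2 f i p = ((A - B)^2 - (A + B)) * f p := by
  have h' : (fun t => f (Function.update p i t))
      = fun t => Real.exp ((-P) * Real.exp t + (-M) * Real.exp (-t) + (-K)) := by
    funext t
    rw [h t]
    exact congrArg Real.exp (by ring)
  have hp : f p = Real.exp ((-P) * Real.exp (p i) + (-M) * Real.exp (-(p i)) + (-K)) := by
    have h2 := h (p i)
    rw [Function.update_eq_self] at h2
    rw [h2]
    exact congrArg Real.exp (by ring)
  unfold pd2
  rw [h', second_deriv_exp, hp, ← hA, ← hB]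
  ring

lemma sum_Icc_split (m : ℕ) (f : ℕ → ℝ) :
    ∑ i ∈ Finset.Icc 1 (m+2), f i = f 1 + (∑ i ∈ Finset.Icc 2 (m+1), f i) + f (m+2) := by
  have h1 : Finset.Icc 1 (m+2) = insert 1 (insert (m+2) (Finset.Icc 2 (m+1))) := by
    ext j
    simp only [Finset.mem_Icc, Finset.mem_insert]
    omega
  rw [h1, Finset.sum_insert (by simp only [Finset.mem_insert, Finset.mem_Icc]; omega),
    Finset.sum_insert (by simp only [Finset.mem_Icc]; omega)]
  ring

lemma key_algebra (m : ℕ) (a : ℝ) (b c : ℕ → ℝ) :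
    ((b 1 + a - c 1)^2 - (b 1 + a + c 1))
      + (∑ i ∈ Finset.Icc 2 (m+1), ((b i - c i)^2 - (b i + c i)))
      + ((b (m+2))^2 - b (m+2))
      - (((a - b 1)^2 - (a + b 1))
        + (∑ i ∈ Finset.Icc 2 (m+1), ((c (i-1) - b i)^2 - (c (i-1) + b i)))
        + ((c (m+1) - b (m+2))^2 - (c (m+1) + b (m+2))))
    = 4*a*(b 1) + 2*(∑ i ∈ Finset.Icc 1 (m+1), c i * b (i+1))
      - 2*a*(c 1) - 2*(∑ i ∈ Finset.Icc 1 (m+1), b i * c i) := by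
  induction m with
  | zero =>
      rw [show Finset.Icc 2 1 = (∅ : Finset ℕ) from by decide,
        show Finset.Icc 1 1 = ({1} : Finset ℕ) from by decide]
      simp only [Finset.sum_empty, Finset.sum_singleton]
      norm_num
      ring
  | succ k ih =>
      have e1 : k + 1 + 1 = k + 2 := rfl
      rw [show Finset.Icc 2 (k+1+1) = Finset.Icc 2 (k+2) from rfl,
        show Finset.Icc 1 (k+1+1) = Finset.Icc 1 (k+2) from rfl]
      rw [Finset.sum_Icc_succ_top (show 2 ≤ k+2 by omega),
        Finset.sum_Icc_succ_top (show 2 ≤ k+2 by omega),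
        Finset.sum_Icc_succ_top (show 1 ≤ k+2 by omega),
        Finset.sum_Icc_succ_top (show 1 ≤ k+2 by omega)]
      simp only [show k+2-1 = k+1 from rfl, show k+1+2 = k+3 from rfl,
        show k+2+1 = k+3 from rfl]
      linear_combination ih

/-- The kernel `Q(z,x) = exp(−(g_1 e^{x_1+z_1} + Σ_{i=1}^{n−1}(e^{z_i−x_i} + g_{i+1} e^{x_{i+1}−z_i})
+ e^{z_n−x_n}))` intertwines the quadratic Hamiltonians of the `C_n` and `D_n` Toda chains. -/
theorem stmt_4 (n : ℕ) (hn : 2 ≤ n) (g : ℕ → ℝ) :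
    let Q : (ℕ → ℝ) → (ℕ → ℝ) → ℝ := fun z x =>
      Real.exp (-(g 1 * Real.exp (x 1 + z 1)
        + (∑ i ∈ Finset.Icc 1 (n - 1),
            (Real.exp (z i - x i) + g (i + 1) * Real.exp (x (i + 1) - z i)))
        + Real.exp (z n - x n)))
    ∀ z x : ℕ → ℝ,
      -(1 / 2) * (∑ i ∈ Finset.Icc 1 n, pd2 (fun z' => Q z' x) i z)
          + (2 * g 1 * Real.exp (2 * z 1)
              + ∑ i ∈ Finset.Icc 1 (n - 1), g (i + 1) * Real.exp (z (i + 1) - z i)) * Q z x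
        = -(1 / 2) * (∑ i ∈ Finset.Icc 1 n, pd2 (fun x' => Q z x') i x)
          + (g 1 * g 2 * Real.exp (x 1 + x 2)
              + ∑ i ∈ Finset.Icc 1 (n - 1), g (i + 1) * Real.exp (x (i + 1) - x i)) * Q z x := by
  obtain ⟨m, rfl⟩ : ∃ m, n = m + 2 := ⟨n - 2, by omega⟩
  intro Q z x
  have hQ : ∀ u v : ℕ → ℝ, Q u v = Real.exp (-(g 1 * Real.exp (v 1 + u 1)
      + (∑ i ∈ Finset.Icc 1 (m+1),
          (Real.exp (u i - v i) + g (i+1) * Real.exp (v (i+1) - u i)))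
      + Real.exp (u (m+2) - v (m+2)))) := fun u v => rfl
  clear_value Q
  -- z-side, coordinate 1
  have hz1 : pd2 (fun z' => Q z' x) 1 z
      = ((Real.exp (z 1 - x 1) + g 1 * Real.exp (x 1 + z 1) - g 2 * Real.exp (x 2 - z 1))^2
        - (Real.exp (z 1 - x 1) + g 1 * Real.exp (x 1 + z 1) + g 2 * Real.exp (x 2 - z 1)))
        * Q z x := by
    apply pd2_exp_aux2 (P := Real.exp (-(x 1)) + g 1 * Real.exp (x 1)) (M := g 2 * Real.exp (x 2))
      (K := (∑ j ∈ (Finset.Icc 1 (m+1)).erase 1,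
          (Real.exp (z j - x j) + g (j+1) * Real.exp (x (j+1) - z j)))
        + Real.exp (z (m+2) - x (m+2)))
    · intro t
      show Q (Function.update z 1 t) x = _
      rw [hQ]
      refine congrArg Real.exp (congrArg Neg.neg ?_)
      rw [← Finset.add_sum_erase _ _ (show (1:ℕ) ∈ Finset.Icc 1 (m+1) by simp)]
      have hsum : ∑ j ∈ (Finset.Icc 1 (m+1)).erase 1,
          (Real.exp (Function.update z 1 t j - x j)
            + g (j+1) * Real.exp (x (j+1) - Function.update z 1 t j))
          = ∑ j ∈ (Finset.Icc 1 (m+1)).erase 1,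
            (Real.exp (z j - x j) + g (j+1) * Real.exp (x (j+1) - z j)) :=
        Finset.sum_congr rfl (fun j hj => by
          rw [Function.update_of_ne (Finset.ne_of_mem_erase hj)])
      rw [hsum, Function.update_self, Function.update_of_ne (show m+2 ≠ 1 by omega)]
      norm_num
      simp only [Real.exp_add, Real.exp_sub, Real.exp_neg]
      ring
    · simp only [Real.exp_add, Real.exp_sub, Real.exp_neg]
      ring
    · simp only [Real.exp_sub, Real.exp_neg]
      ring
  -- z-side, coordinate m+2
  have hzn : pd2 (fun z' => Q z' x) (m+2) z
      = ((Real.exp (z (m+2) - x (m+2)) - 0)^2 - (Real.exp (z (m+2) - x (m+2)) + 0)) * Q z x := by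
    apply pd2_exp_aux2 (P := Real.exp (-(x (m+2)))) (M := 0)
      (K := g 1 * Real.exp (x 1 + z 1)
        + (∑ j ∈ Finset.Icc 1 (m+1),
            (Real.exp (z j - x j) + g (j+1) * Real.exp (x (j+1) - z j))))
    · intro t
      show Q (Function.update z (m+2) t) x = _
      rw [hQ]
      refine congrArg Real.exp (congrArg Neg.neg ?_)
      have hsum : ∑ j ∈ Finset.Icc 1 (m+1),
          (Real.exp (Function.update z (m+2) t j - x j)
            + g (j+1) * Real.exp (x (j+1) - Function.update z (m+2) t j))
          = ∑ j ∈ Finset.Icc 1 (m+1),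
            (Real.exp (z j - x j) + g (j+1) * Real.exp (x (j+1) - z j)) :=
        Finset.sum_congr rfl (fun j hj => by
          simp only [Finset.mem_Icc] at hj
          rw [Function.update_of_ne (show j ≠ m+2 by omega)])
      rw [hsum, Function.update_self, Function.update_of_ne (show (1:ℕ) ≠ m+2 by omega)]
      simp only [Real.exp_sub, Real.exp_neg]
      ring
    · simp only [Real.exp_sub, Real.exp_neg]
      ring
    · ring
  -- z-side, interior coordinates
  have hzint : ∑ i ∈ Finset.Icc 2 (m+1), pd2 (fun z' => Q z' x) i z
      = ∑ i ∈ Finset.Icc 2 (m+1),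
        (((Real.exp (z i - x i) - g (i+1) * Real.exp (x (i+1) - z i))^2
          - (Real.exp (z i - x i) + g (i+1) * Real.exp (x (i+1) - z i))) * Q z x) := by
    refine Finset.sum_congr rfl (fun i hi => ?_)
    simp only [Finset.mem_Icc] at hi
    apply pd2_exp_aux2 (P := Real.exp (-(x i))) (M := g (i+1) * Real.exp (x (i+1)))
      (K := g 1 * Real.exp (x 1 + z 1)
        + (∑ j ∈ (Finset.Icc 1 (m+1)).erase i,
            (Real.exp (z j - x j) + g (j+1) * Real.exp (x (j+1) - z j)))
        + Real.exp (z (m+2) - x (m+2)))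
    · intro t
      show Q (Function.update z i t) x = _
      rw [hQ]
      refine congrArg Real.exp (congrArg Neg.neg ?_)
      rw [← Finset.add_sum_erase _ _ (show i ∈ Finset.Icc 1 (m+1) by
        simp only [Finset.mem_Icc]; omega)]
      have hsum : ∑ j ∈ (Finset.Icc 1 (m+1)).erase i,
          (Real.exp (Function.update z i t j - x j)
            + g (j+1) * Real.exp (x (j+1) - Function.update z i t j))
          = ∑ j ∈ (Finset.Icc 1 (m+1)).erase i,
            (Real.exp (z j - x j) + g (j+1) * Real.exp (x (j+1) - z j)) :=
        Finset.sum_congr rfl (fun j hj => by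
          rw [Function.update_of_ne (Finset.ne_of_mem_erase hj)])
      rw [hsum, Function.update_self, Function.update_of_ne (show (1:ℕ) ≠ i by omega),
        Function.update_of_ne (show m+2 ≠ i by omega)]
      simp only [Real.exp_sub, Real.exp_neg]
      ring
    · simp only [Real.exp_sub, Real.exp_neg]
      ring
    · simp only [Real.exp_sub, Real.exp_neg]
      ring
  -- x-side, coordinate 1
  have hx1 : pd2 (fun x' => Q z x') 1 x
      = ((g 1 * Real.exp (x 1 + z 1) - Real.exp (z 1 - x 1))^2
        - (g 1 * Real.exp (x 1 + z 1) + Real.exp (z 1 - x 1))) * Q z x := by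
    apply pd2_exp_aux2 (P := g 1 * Real.exp (z 1)) (M := Real.exp (z 1))
      (K := g 2 * Real.exp (x 2 - z 1)
        + (∑ j ∈ (Finset.Icc 1 (m+1)).erase 1,
            (Real.exp (z j - x j) + g (j+1) * Real.exp (x (j+1) - z j)))
        + Real.exp (z (m+2) - x (m+2)))
    · intro t
      show Q z (Function.update x 1 t) = _
      rw [hQ]
      refine congrArg Real.exp (congrArg Neg.neg ?_)
      rw [← Finset.add_sum_erase _ _ (show (1:ℕ) ∈ Finset.Icc 1 (m+1) by simp)]
      have hsum : ∑ j ∈ (Finset.Icc 1 (m+1)).erase 1,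
          (Real.exp (z j - Function.update x 1 t j)
            + g (j+1) * Real.exp (Function.update x 1 t (j+1) - z j))
          = ∑ j ∈ (Finset.Icc 1 (m+1)).erase 1,
            (Real.exp (z j - x j) + g (j+1) * Real.exp (x (j+1) - z j)) :=
        Finset.sum_congr rfl (fun j hj => by
          simp only [Finset.mem_erase, Finset.mem_Icc] at hj
          rw [Function.update_of_ne (show j ≠ 1 by omega),
            Function.update_of_ne (show j+1 ≠ 1 by omega)])
      rw [hsum, Function.update_of_ne (show (1:ℕ)+1 ≠ 1 by omega),
        Function.update_of_ne (show m+2 ≠ 1 by omega), Function.update_self]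
      norm_num
      simp only [Real.exp_add, Real.exp_sub, Real.exp_neg]
      ring
    · simp only [Real.exp_add, Real.exp_sub, Real.exp_neg]
      ring
    · simp only [Real.exp_sub, Real.exp_neg]
      ring
  -- x-side, coordinate m+2
  have hxn : pd2 (fun x' => Q z x') (m+2) x
      = ((g (m+2) * Real.exp (x (m+2) - z (m+1)) - Real.exp (z (m+2) - x (m+2)))^2
        - (g (m+2) * Real.exp (x (m+2) - z (m+1)) + Real.exp (z (m+2) - x (m+2)))) * Q z x := by
    apply pd2_exp_aux2 (P := g (m+2) * Real.exp (-(z (m+1)))) (M := Real.exp (z (m+2)))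
      (K := g 1 * Real.exp (x 1 + z 1)
        + Real.exp (z (m+1) - x (m+1))
        + (∑ j ∈ (Finset.Icc 1 (m+1)).erase (m+1),
            (Real.exp (z j - x j) + g (j+1) * Real.exp (x (j+1) - z j))))
    · intro t
      show Q z (Function.update x (m+2) t) = _
      rw [hQ]
      refine congrArg Real.exp (congrArg Neg.neg ?_)
      rw [← Finset.add_sum_erase _ _ (show m+1 ∈ Finset.Icc 1 (m+1) by
        simp only [Finset.mem_Icc]; omega)]
      have hsum : ∑ j ∈ (Finset.Icc 1 (m+1)).erase (m+1),
          (Real.exp (z j - Function.update x (m+2) t j)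
            + g (j+1) * Real.exp (Function.update x (m+2) t (j+1) - z j))
          = ∑ j ∈ (Finset.Icc 1 (m+1)).erase (m+1),
            (Real.exp (z j - x j) + g (j+1) * Real.exp (x (j+1) - z j)) :=
        Finset.sum_congr rfl (fun j hj => by
          simp only [Finset.mem_erase, Finset.mem_Icc] at hj
          rw [Function.update_of_ne (show j ≠ m+2 by omega),
            Function.update_of_ne (show j+1 ≠ m+2 by omega)])
      rw [hsum, show m+1+1 = m+2 from rfl, Function.update_self,
        Function.update_of_ne (show m+1 ≠ m+2 by omega),
        Function.update_of_ne (show (1:ℕ) ≠ m+2 by omega)]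
      simp only [Real.exp_sub, Real.exp_neg]
      ring
    · simp only [Real.exp_sub, Real.exp_neg]
      ring
    · simp only [Real.exp_sub, Real.exp_neg]
      ring
  -- x-side, interior coordinates
  have hxint : ∑ i ∈ Finset.Icc 2 (m+1), pd2 (fun x' => Q z x') i x
      = ∑ i ∈ Finset.Icc 2 (m+1),
        (((g (i-1+1) * Real.exp (x (i-1+1) - z (i-1)) - Real.exp (z i - x i))^2
          - (g (i-1+1) * Real.exp (x (i-1+1) - z (i-1)) + Real.exp (z i - x i))) * Q z x) := by
    refine Finset.sum_congr rfl (fun i hi => ?_)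
    simp only [Finset.mem_Icc] at hi
    apply pd2_exp_aux2 (P := g (i-1+1) * Real.exp (-(z (i-1)))) (M := Real.exp (z i))
      (K := g 1 * Real.exp (x 1 + z 1)
        + (g (i+1) * Real.exp (x (i+1) - z i)
          + (Real.exp (z (i-1) - x (i-1))
            + (∑ j ∈ ((Finset.Icc 1 (m+1)).erase i).erase (i-1),
                (Real.exp (z j - x j) + g (j+1) * Real.exp (x (j+1) - z j)))))
        + Real.exp (z (m+2) - x (m+2)))
    · intro t
      show Q z (Function.update x i t) = _
      rw [hQ]
      refine congrArg Real.exp (congrArg Neg.neg ?_)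
      rw [← Finset.add_sum_erase _ _ (show i ∈ Finset.Icc 1 (m+1) by
        simp only [Finset.mem_Icc]; omega)]
      rw [← Finset.add_sum_erase _ _ (show i-1 ∈ (Finset.Icc 1 (m+1)).erase i by
        simp only [Finset.mem_erase, Finset.mem_Icc]; omega)]
      have hsum : ∑ j ∈ ((Finset.Icc 1 (m+1)).erase i).erase (i-1),
          (Real.exp (z j - Function.update x i t j)
            + g (j+1) * Real.exp (Function.update x i t (j+1) - z j))
          = ∑ j ∈ ((Finset.Icc 1 (m+1)).erase i).erase (i-1),
            (Real.exp (z j - x j) + g (j+1) * Real.exp (x (j+1) - z j)) :=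
        Finset.sum_congr rfl (fun j hj => by
          simp only [Finset.mem_erase, Finset.mem_Icc] at hj
          rw [Function.update_of_ne (show j ≠ i by omega),
            Function.update_of_ne (show j+1 ≠ i by omega)])
      rw [hsum, show i-1+1 = i from by omega, Function.update_self,
        Function.update_of_ne (show i+1 ≠ i by omega),
        Function.update_of_ne (show i-1 ≠ i by omega),
        Function.update_of_ne (show (1:ℕ) ≠ i by omega),
        Function.update_of_ne (show m+2 ≠ i by omega)]
      simp only [Real.exp_sub, Real.exp_neg]
      ring
    · rw [show i-1+1 = i from by omega]
      simp only [Real.exp_sub, Real.exp_neg]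
      ring
    · simp only [Real.exp_sub, Real.exp_neg]
      ring
  -- potentials
  have hVz : ∑ i ∈ Finset.Icc 1 (m+1), g (i+1) * Real.exp (z (i+1) - z i)
      = ∑ i ∈ Finset.Icc 1 (m+1),
        (g (i+1) * Real.exp (x (i+1) - z i)) * Real.exp (z (i+1) - x (i+1)) :=
    Finset.sum_congr rfl (fun i _ => by
      rw [mul_assoc, exp_mul_exp _ _ _ (show x (i+1) - z i + (z (i+1) - x (i+1))
        = z (i+1) - z i by ring)])
  have hVx : ∑ i ∈ Finset.Icc 1 (m+1), g (i+1) * Real.exp (x (i+1) - x i)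
      = ∑ i ∈ Finset.Icc 1 (m+1),
        Real.exp (z i - x i) * (g (i+1) * Real.exp (x (i+1) - z i)) :=
    Finset.sum_congr rfl (fun i _ => by
      rw [show Real.exp (z i - x i) * (g (i+1) * Real.exp (x (i+1) - z i))
        = g (i+1) * (Real.exp (z i - x i) * Real.exp (x (i+1) - z i)) from by ring,
        exp_mul_exp _ _ _ (show z i - x i + (x (i+1) - z i) = x (i+1) - x i by ring)])
  have h2z1 : Real.exp (2 * z 1) = Real.exp (x 1 + z 1) * Real.exp (z 1 - x 1) :=
    (exp_mul_exp _ _ _ (by ring)).symm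
  have hx12 : Real.exp (x 1 + x 2) = Real.exp (x 1 + z 1) * Real.exp (x 2 - z 1) :=
    (exp_mul_exp _ _ _ (by ring)).symm
  have KEY := key_algebra m (g 1 * Real.exp (x 1 + z 1))
    (fun i => Real.exp (z i - x i)) (fun i => g (i+1) * Real.exp (x (i+1) - z i))
  simp only [show m+1+1 = m+2 from rfl] at KEY
  simp only [show m+1+1 = m+2 from rfl, show (1:ℕ)+1 = 2 from rfl] at KEY
  simp only [show m+2-1 = m+1 from rfl]
  rw [sum_Icc_split m (fun i => pd2 (fun z' => Q z' x) i z),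
    sum_Icc_split m (fun i => pd2 (fun x' => Q z x') i x)]
  rw [hz1, hzn, hzint, hx1, hxn, hxint, ← Finset.sum_mul, ← Finset.sum_mul,
    hVz, hVx, h2z1, hx12]
  linear_combination (-(1/2 : ℝ) * Q z x) * KEY
end

section
/- Let n ≥ 2 and g_1,…,g_n ∈ ℝ. Define Q : ℝ^n × ℝ^{n−1} → ℝ by Q(x,z) = exp(−(g_1 e^{x_1 + z_1} + Σ_{i=1}^{n−1}(e^{z_i − x_i} + g_{i+1} e^{x_{i+1} − z_i}))). Then for all (x,z): (−(1/2) Σ_{i=1}^{n−1} ∂²/∂z_i² + 2 g_1 e^{2z_1} + Σ_{i=1}^{n−2} g_{i+1} e^{z_{i+1}−z_i}) Q = (−(1/2) Σ_{i=1}^n ∂²/∂x_i² + g_1 g_2 e^{x_1 + x_2} + Σ_{i=1}^{n−1} g_{i+1} e^{x_{i+1}−x_i}) Q. -/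
noncomputable def fABC (A B C : ℝ) : ℝ → ℝ :=
  fun t => Real.exp (-(A + B * Real.exp t + C * Real.exp (-t)))

lemma hasDerivAt_fABC (A B C t : ℝ) :
    HasDerivAt (fABC A B C) ((C * Real.exp (-t) - B * Real.exp t) * fABC A B C t) t := by
  have hB : HasDerivAt (fun t : ℝ => B * Real.exp t) (B * Real.exp t) t :=
    (Real.hasDerivAt_exp t).const_mul B
  have hC : HasDerivAt (fun t : ℝ => C * Real.exp (-t)) (-(C * Real.exp (-t))) t := by
    simpa using (((hasDerivAt_neg t).exp).const_mul C)
  have h1 : HasDerivAt (fun t : ℝ => -(A + B * Real.exp t + C * Real.exp (-t)))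
      (C * Real.exp (-t) - B * Real.exp t) t := by
    have : HasDerivAt (fun t : ℝ => -(A + B * Real.exp t + C * Real.exp (-t))) _ t :=
      (((hasDerivAt_const t A).add hB).add hC).neg
    convert this using 1
    ring
  unfold fABC
  rw [mul_comm]
  exact h1.exp

lemma pd2_fABC (A B C t : ℝ) :
    deriv (deriv (fABC A B C)) t =
      ((B * Real.exp t - C * Real.exp (-t)) ^ 2 - (B * Real.exp t + C * Real.exp (-t)))
        * fABC A B C t := by
  have hd : deriv (fABC A B C)
      = fun t => (C * Real.exp (-t) - B * Real.exp t) * fABC A B C t :=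
    funext fun t => (hasDerivAt_fABC A B C t).deriv
  rw [hd]
  have h1 : HasDerivAt (fun t : ℝ => C * Real.exp (-t) - B * Real.exp t)
      (-(C * Real.exp (-t)) - B * Real.exp t) t := by
    have hB : HasDerivAt (fun t : ℝ => B * Real.exp t) (B * Real.exp t) t :=
      (Real.hasDerivAt_exp t).const_mul B
    have hC : HasDerivAt (fun t : ℝ => C * Real.exp (-t)) (-(C * Real.exp (-t))) t := by
      simpa using (((hasDerivAt_neg t).exp).const_mul C)
    exact hC.sub hB
  have h2 : HasDerivAt (fun t => (C * Real.exp (-t) - B * Real.exp t) * fABC A B C t) _ t :=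
    h1.mul (hasDerivAt_fABC A B C t)
  rw [h2.deriv]
  ring


lemma key (m : ℕ) (hm : 1 ≤ m) (a b : ℕ → ℝ) (c : ℝ) :
    -(1 / 2) * (∑ i ∈ Finset.Icc 1 m,
        (((a i + (if i = 1 then c else 0)) - b i) ^ 2
          - ((a i + (if i = 1 then c else 0)) + b i)))
      + (2 * (c * a 1) + ∑ i ∈ Finset.Icc 1 (m - 1), b i * a (i + 1))
    = -(1 / 2) * (∑ i ∈ Finset.Icc 1 (m + 1),
        ((((if i = 1 then c else 0) + (if 2 ≤ i then b (i - 1) else 0))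
            - (if i ≤ m then a i else 0)) ^ 2
          - (((if i = 1 then c else 0) + (if 2 ≤ i then b (i - 1) else 0))
            + (if i ≤ m then a i else 0))))
      + (c * b 1 + ∑ i ∈ Finset.Icc 1 m, a i * b i) := by
  induction m with
  | zero => omega
  | succ m ih =>
    rcases Nat.eq_or_lt_of_le hm with h1 | h1
    · -- m + 1 = 1, i.e. m = 0
      have hm0 : m = 0 := by omega
      subst hm0
      rw [show (1:ℕ) + 1 = 2 from rfl]
      rw [show Finset.Icc 1 2 = {1, 2} from rfl]
      norm_num [Finset.sum_insert, Finset.sum_pair]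
      ring
    · have hm1 : 1 ≤ m := by omega
      have ih' := ih hm1
      have e1 : ∑ i ∈ Finset.Icc 1 (m + 1),
          (((a i + (if i = 1 then c else 0)) - b i) ^ 2
            - ((a i + (if i = 1 then c else 0)) + b i))
          = (∑ i ∈ Finset.Icc 1 m,
            (((a i + (if i = 1 then c else 0)) - b i) ^ 2
              - ((a i + (if i = 1 then c else 0)) + b i)))
            + (((a (m+1) + 0) - b (m+1)) ^ 2 - ((a (m+1) + 0) + b (m+1))) := by
        rw [Finset.sum_Icc_succ_top (by omega)]
        rw [if_neg (show ¬ m + 1 = 1 by omega)]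
      have e2 : ∑ i ∈ Finset.Icc 1 (m + 1 - 1), b i * a (i + 1)
          = (∑ i ∈ Finset.Icc 1 (m - 1), b i * a (i + 1)) + b m * a (m + 1) := by
        have h := Finset.sum_Icc_succ_top (a := 1) (b := m - 1)
          (f := fun i => b i * a (i + 1)) (by omega)
        rw [show m - 1 + 1 = m by omega] at h
        rw [show m + 1 - 1 = m from rfl, h]
      have e3 : ∑ i ∈ Finset.Icc 1 (m + 1), a i * b i
          = (∑ i ∈ Finset.Icc 1 m, a i * b i) + a (m+1) * b (m+1) := by
        rw [Finset.sum_Icc_succ_top (by omega)]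
      -- the (m+1)-sum on the x side, with threshold m+1
      have e4 : ∑ i ∈ Finset.Icc 1 (m + 1 + 1),
          ((((if i = 1 then c else 0) + (if 2 ≤ i then b (i - 1) else 0))
              - (if i ≤ m + 1 then a i else 0)) ^ 2
            - (((if i = 1 then c else 0) + (if 2 ≤ i then b (i - 1) else 0))
              + (if i ≤ m + 1 then a i else 0)))
          = (∑ i ∈ Finset.Icc 1 (m + 1),
            ((((if i = 1 then c else 0) + (if 2 ≤ i then b (i - 1) else 0))
                - (if i ≤ m then a i else 0)) ^ 2
              - (((if i = 1 then c else 0) + (if 2 ≤ i then b (i - 1) else 0))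
                + (if i ≤ m then a i else 0))))
            - (((0 + b m) - 0) ^ 2 - ((0 + b m) + 0))
            + (((0 + b m) - a (m+1)) ^ 2 - ((0 + b m) + a (m+1)))
            + (((0 + b (m+1)) - 0) ^ 2 - ((0 + b (m+1)) + 0)) := by
        rw [Finset.sum_Icc_succ_top (by omega : 1 ≤ m + 1 + 1),
          Finset.sum_Icc_succ_top (by omega : 1 ≤ m + 1),
          Finset.sum_Icc_succ_top (by omega : 1 ≤ m + 1)]
        have hcong : ∑ i ∈ Finset.Icc 1 m,
            ((((if i = 1 then c else 0) + (if 2 ≤ i then b (i - 1) else 0))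
                - (if i ≤ m + 1 then a i else 0)) ^ 2
              - (((if i = 1 then c else 0) + (if 2 ≤ i then b (i - 1) else 0))
                + (if i ≤ m + 1 then a i else 0)))
            = ∑ i ∈ Finset.Icc 1 m,
            ((((if i = 1 then c else 0) + (if 2 ≤ i then b (i - 1) else 0))
                - (if i ≤ m then a i else 0)) ^ 2
              - (((if i = 1 then c else 0) + (if 2 ≤ i then b (i - 1) else 0))
                + (if i ≤ m then a i else 0))) := by
          refine Finset.sum_congr rfl fun i hi => ?_
          have him := (Finset.mem_Icc.mp hi).2
          rw [if_pos (by omega : i ≤ m + 1), if_pos (by omega : i ≤ m)]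
        rw [hcong]
        rw [if_neg (show ¬ m + 1 = 1 by omega), if_pos (show 2 ≤ m + 1 by omega),
          if_pos (le_refl (m+1)), if_neg (show ¬ m + 1 ≤ m by omega),
          if_neg (show ¬ m + 1 + 1 = 1 by omega), if_pos (show 2 ≤ m + 1 + 1 by omega),
          if_neg (show ¬ m + 1 + 1 ≤ m + 1 by omega),
          show m + 1 - 1 = m from rfl, show m + 1 + 1 - 1 = m + 1 from rfl]
        ring
      rw [e1, e2, e3, e4]
      linarith [ih']

lemma pd2_z (n : ℕ) (hn : 2 ≤ n) (g x z : ℕ → ℝ) (i : ℕ) (hi1 : 1 ≤ i) (hi2 : i ≤ n - 1) :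
    pd2 (fun z' => Real.exp (-(g 1 * Real.exp (x 1 + z' 1)
        + ∑ j ∈ Finset.Icc 1 (n - 1),
            (Real.exp (z' j - x j) + g (j + 1) * Real.exp (x (j + 1) - z' j))))) i z
    = (((Real.exp (z i - x i) + (if i = 1 then g 1 * Real.exp (x 1 + z 1) else 0))
          - g (i + 1) * Real.exp (x (i + 1) - z i)) ^ 2
        - ((Real.exp (z i - x i) + (if i = 1 then g 1 * Real.exp (x 1 + z 1) else 0))
          + g (i + 1) * Real.exp (x (i + 1) - z i)))
      * Real.exp (-(g 1 * Real.exp (x 1 + z 1)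
        + ∑ j ∈ Finset.Icc 1 (n - 1),
            (Real.exp (z j - x j) + g (j + 1) * Real.exp (x (j + 1) - z j)))) := by
  classical
  set B : ℝ := Real.exp (-(x i)) + (if i = 1 then g 1 * Real.exp (x 1) else 0) with hB
  set C : ℝ := g (i + 1) * Real.exp (x (i + 1)) with hC
  set S : ℝ := g 1 * Real.exp (x 1 + z 1)
      + ∑ j ∈ Finset.Icc 1 (n - 1),
          (Real.exp (z j - x j) + g (j + 1) * Real.exp (x (j + 1) - z j)) with hS
  set A : ℝ := S - (B * Real.exp (z i) + C * Real.exp (-(z i))) with hA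
  have hmem : i ∈ Finset.Icc 1 (n - 1) := Finset.mem_Icc.mpr ⟨hi1, hi2⟩
  have hfun : (fun t => Real.exp (-(g 1 * Real.exp (x 1 + Function.update z i t 1)
        + ∑ j ∈ Finset.Icc 1 (n - 1),
            (Real.exp (Function.update z i t j - x j)
              + g (j + 1) * Real.exp (x (j + 1) - Function.update z i t j)))))
      = fABC A B C := by
    funext t
    unfold fABC
    congr 1
    have hsum : ∀ w : ℕ → ℝ,
        ∑ j ∈ Finset.Icc 1 (n - 1),
            (Real.exp (w j - x j) + g (j + 1) * Real.exp (x (j + 1) - w j))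
          = (∑ j ∈ (Finset.Icc 1 (n - 1)).erase i,
              (Real.exp (w j - x j) + g (j + 1) * Real.exp (x (j + 1) - w j)))
            + (Real.exp (w i - x i) + g (i + 1) * Real.exp (x (i + 1) - w i)) := by
      intro w
      exact (Finset.sum_erase_add _ _ hmem).symm
    have herase : ∑ j ∈ (Finset.Icc 1 (n - 1)).erase i,
          (Real.exp (Function.update z i t j - x j)
            + g (j + 1) * Real.exp (x (j + 1) - Function.update z i t j))
        = ∑ j ∈ (Finset.Icc 1 (n - 1)).erase i,
          (Real.exp (z j - x j) + g (j + 1) * Real.exp (x (j + 1) - z j)) := by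
      refine Finset.sum_congr rfl fun j hj => ?_
      rw [Function.update_of_ne (Finset.ne_of_mem_erase hj)]
    rw [hsum, herase, hA, hS, hsum z, Function.update_self]
    by_cases h1 : i = 1
    · subst h1
      rw [Function.update_self]
      simp only [if_pos rfl, hB, hC, ↓reduceIte]
      simp only [Real.exp_add, Real.exp_sub, Real.exp_neg]
      field_simp
      ring
    · rw [Function.update_of_ne (fun h => h1 h.symm)]
      simp only [if_neg h1, hB, hC]
      simp only [Real.exp_add, Real.exp_sub, Real.exp_neg]
      field_simp
      ring
  unfold pd2
  rw [hfun, pd2_fABC]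
  have hBe : B * Real.exp (z i)
      = Real.exp (z i - x i) + (if i = 1 then g 1 * Real.exp (x 1 + z 1) else 0) := by
    by_cases h1 : i = 1
    · subst h1
      simp only [hB, if_pos rfl, ↓reduceIte]
      rw [Real.exp_sub, Real.exp_add, Real.exp_neg]
      field_simp
    · simp only [hB, if_neg h1]
      rw [Real.exp_sub, Real.exp_neg]
      field_simp; ring
  have hCe : C * Real.exp (-(z i)) = g (i + 1) * Real.exp (x (i + 1) - z i) := by
    rw [hC, Real.exp_sub, Real.exp_neg]
    field_simp
  have hAe : A + (Real.exp (z i - x i) + (if i = 1 then g 1 * Real.exp (x 1 + z 1) else 0))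
      + g (i + 1) * Real.exp (x (i + 1) - z i) = S := by
    rw [hA, ← hBe, ← hCe]; ring
  unfold fABC
  rw [hBe, hCe, hAe]

lemma pd2_x (n : ℕ) (hn : 2 ≤ n) (g x z : ℕ → ℝ) (i : ℕ) (hi1 : 1 ≤ i) (hi2 : i ≤ n) :
    pd2 (fun x' => Real.exp (-(g 1 * Real.exp (x' 1 + z 1)
        + ∑ j ∈ Finset.Icc 1 (n - 1),
            (Real.exp (z j - x' j) + g (j + 1) * Real.exp (x' (j + 1) - z j))))) i x
    = ((((if i = 1 then g 1 * Real.exp (x 1 + z 1) else 0)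
          + (if 2 ≤ i then g i * Real.exp (x i - z (i - 1)) else 0))
          - (if i ≤ n - 1 then Real.exp (z i - x i) else 0)) ^ 2
        - (((if i = 1 then g 1 * Real.exp (x 1 + z 1) else 0)
          + (if 2 ≤ i then g i * Real.exp (x i - z (i - 1)) else 0))
          + (if i ≤ n - 1 then Real.exp (z i - x i) else 0)))
      * Real.exp (-(g 1 * Real.exp (x 1 + z 1)
        + ∑ j ∈ Finset.Icc 1 (n - 1),
            (Real.exp (z j - x j) + g (j + 1) * Real.exp (x (j + 1) - z j)))) := by
  classical
  set B : ℝ := (if i = 1 then g 1 * Real.exp (z 1) else 0)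
      + (if 2 ≤ i then g i * Real.exp (-(z (i - 1))) else 0) with hB
  set C : ℝ := (if i ≤ n - 1 then Real.exp (z i) else 0) with hC
  set S : ℝ := g 1 * Real.exp (x 1 + z 1)
      + ∑ j ∈ Finset.Icc 1 (n - 1),
          (Real.exp (z j - x j) + g (j + 1) * Real.exp (x (j + 1) - z j)) with hS
  set A : ℝ := S - (B * Real.exp (x i) + C * Real.exp (-(x i))) with hA
  have hn1 : 1 ≤ n - 1 := by omega
  have hfun : (fun t => Real.exp (-(g 1 * Real.exp (Function.update x i t 1 + z 1)
        + ∑ j ∈ Finset.Icc 1 (n - 1),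
            (Real.exp (z j - Function.update x i t j)
              + g (j + 1) * Real.exp (Function.update x i t (j + 1) - z j)))))
      = fABC A B C := by
    funext t
    unfold fABC
    congr 1
    rw [hA, hS, hB, hC]
    rcases eq_or_ne i 1 with h1 | h1
    · -- i = 1 : only index j = 1 is affected
      subst h1
      have hmem : 1 ∈ Finset.Icc 1 (n - 1) := Finset.mem_Icc.mpr ⟨le_refl _, hn1⟩
      rw [← Finset.sum_erase_add _ _ hmem, ← Finset.sum_erase_add _
        (fun j => Real.exp (z j - x j) + g (j + 1) * Real.exp (x (j + 1) - z j)) hmem]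
      have herase : ∑ j ∈ (Finset.Icc 1 (n - 1)).erase 1,
            (Real.exp (z j - Function.update x 1 t j)
              + g (j + 1) * Real.exp (Function.update x 1 t (j + 1) - z j))
          = ∑ j ∈ (Finset.Icc 1 (n - 1)).erase 1,
            (Real.exp (z j - x j) + g (j + 1) * Real.exp (x (j + 1) - z j)) := by
        refine Finset.sum_congr rfl fun j hj => ?_
        have hj1 : j ≠ 1 := Finset.ne_of_mem_erase hj
        have hjm := Finset.mem_Icc.mp (Finset.mem_of_mem_erase hj)
        rw [Function.update_of_ne hj1, Function.update_of_ne (show j + 1 ≠ 1 by omega)]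
      rw [herase, Function.update_self, Function.update_of_ne (show (2:ℕ) ≠ 1 by omega)]
      simp only [if_pos rfl, if_pos (le_refl 1), if_neg (show ¬ (2:ℕ) ≤ 1 by omega),
        if_pos hn1, ↓reduceIte]
      simp only [Real.exp_add, Real.exp_sub, Real.exp_neg]
      field_simp
      ring
    · have higer : 2 ≤ i := by omega
      rcases eq_or_ne i n with hne | hne
      · -- i = n : only index j = n - 1 = i - 1 affected (through x' (j+1))
        have hmem : i - 1 ∈ Finset.Icc 1 (n - 1) := Finset.mem_Icc.mpr ⟨by omega, by omega⟩
        rw [← Finset.sum_erase_add _ _ hmem, ← Finset.sum_erase_add _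
          (fun j => Real.exp (z j - x j) + g (j + 1) * Real.exp (x (j + 1) - z j)) hmem]
        have herase : ∑ j ∈ (Finset.Icc 1 (n - 1)).erase (i - 1),
              (Real.exp (z j - Function.update x i t j)
                + g (j + 1) * Real.exp (Function.update x i t (j + 1) - z j))
            = ∑ j ∈ (Finset.Icc 1 (n - 1)).erase (i - 1),
              (Real.exp (z j - x j) + g (j + 1) * Real.exp (x (j + 1) - z j)) := by
          refine Finset.sum_congr rfl fun j hj => ?_
          have hjn : j ≠ i - 1 := Finset.ne_of_mem_erase hj
          have hjm := Finset.mem_Icc.mp (Finset.mem_of_mem_erase hj)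
          rw [Function.update_of_ne (show j ≠ i by omega),
            Function.update_of_ne (show j + 1 ≠ i by omega)]
        have hii : i - 1 + 1 = i := by omega
        rw [herase, hii, Function.update_self,
          Function.update_of_ne (show i - 1 ≠ i by omega),
          Function.update_of_ne (show (1:ℕ) ≠ i by omega)]
        simp only [if_neg h1, if_pos higer, if_neg (show ¬ i ≤ n - 1 by omega)]
        simp only [Real.exp_add, Real.exp_sub, Real.exp_neg]
        field_simp
        ring
      · -- 2 ≤ i ≤ n - 1 : indices j = i - 1 and j = i affected
        have hi2' : i ≤ n - 1 := by omega
        have hmem : i ∈ Finset.Icc 1 (n - 1) := Finset.mem_Icc.mpr ⟨hi1, hi2'⟩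
        have hmem' : i - 1 ∈ (Finset.Icc 1 (n - 1)).erase i :=
          Finset.mem_erase.mpr ⟨by omega, Finset.mem_Icc.mpr ⟨by omega, by omega⟩⟩
        rw [← Finset.sum_erase_add _ _ hmem, ← Finset.sum_erase_add _ _ hmem',
          ← Finset.sum_erase_add _
            (fun j => Real.exp (z j - x j) + g (j + 1) * Real.exp (x (j + 1) - z j)) hmem,
          ← Finset.sum_erase_add _
            (fun j => Real.exp (z j - x j) + g (j + 1) * Real.exp (x (j + 1) - z j)) hmem']
        have herase : ∑ j ∈ ((Finset.Icc 1 (n - 1)).erase i).erase (i - 1),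
              (Real.exp (z j - Function.update x i t j)
                + g (j + 1) * Real.exp (Function.update x i t (j + 1) - z j))
            = ∑ j ∈ ((Finset.Icc 1 (n - 1)).erase i).erase (i - 1),
              (Real.exp (z j - x j) + g (j + 1) * Real.exp (x (j + 1) - z j)) := by
          refine Finset.sum_congr rfl fun j hj => ?_
          have hj1 : j ≠ i - 1 := Finset.ne_of_mem_erase hj
          have hj2 : j ≠ i := Finset.ne_of_mem_erase (Finset.mem_of_mem_erase hj)
          rw [Function.update_of_ne hj2, Function.update_of_ne (show j + 1 ≠ i by omega)]
        have hii : i - 1 + 1 = i := by omega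
        rw [herase, hii, Function.update_self,
          Function.update_of_ne (show i - 1 ≠ i by omega),
          Function.update_of_ne (show i + 1 ≠ i by omega),
          Function.update_of_ne (show (1:ℕ) ≠ i by omega)]
        simp only [if_neg h1, if_pos higer, if_pos hi2']
        simp only [Real.exp_add, Real.exp_sub, Real.exp_neg]
        field_simp
        ring
  have hBe : B * Real.exp (x i)
      = (if i = 1 then g 1 * Real.exp (x 1 + z 1) else 0)
        + (if 2 ≤ i then g i * Real.exp (x i - z (i - 1)) else 0) := by
    rw [hB, add_mul]
    congr 1
    · rcases eq_or_ne i 1 with h | h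
      · subst h; rw [if_pos rfl, if_pos rfl, Real.exp_add]; ring
      · rw [if_neg h, if_neg h, zero_mul]
    · rcases le_or_gt 2 i with h | h
      · rw [if_pos h, if_pos h, Real.exp_sub, Real.exp_neg]; field_simp
      · rw [if_neg (by omega), if_neg (by omega), zero_mul]
  have hCe : C * Real.exp (-(x i)) = (if i ≤ n - 1 then Real.exp (z i - x i) else 0) := by
    rw [hC]
    rcases le_or_gt i (n - 1) with h | h
    · rw [if_pos h, if_pos h, Real.exp_sub, Real.exp_neg]; field_simp
    · rw [if_neg (by omega), if_neg (by omega), zero_mul]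
  have hAe : A + ((if i = 1 then g 1 * Real.exp (x 1 + z 1) else 0)
        + (if 2 ≤ i then g i * Real.exp (x i - z (i - 1)) else 0))
      + (if i ≤ n - 1 then Real.exp (z i - x i) else 0) = S := by
    rw [hA, ← hBe, ← hCe]; ring
  unfold pd2
  rw [hfun, pd2_fABC]
  unfold fABC
  rw [hBe, hCe, hAe]

theorem main' (n : ℕ) (hn : 2 ≤ n) (g : ℕ → ℝ) (x z : ℕ → ℝ) :
    -(1 / 2) * (∑ i ∈ Finset.Icc 1 (n - 1),
        pd2 (fun z' => Real.exp (-(g 1 * Real.exp (x 1 + z' 1)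
          + ∑ j ∈ Finset.Icc 1 (n - 1),
              (Real.exp (z' j - x j) + g (j + 1) * Real.exp (x (j + 1) - z' j))))) i z)
      + (2 * g 1 * Real.exp (2 * z 1)
          + ∑ i ∈ Finset.Icc 1 (n - 2), g (i + 1) * Real.exp (z (i + 1) - z i))
        * Real.exp (-(g 1 * Real.exp (x 1 + z 1)
          + ∑ j ∈ Finset.Icc 1 (n - 1),
              (Real.exp (z j - x j) + g (j + 1) * Real.exp (x (j + 1) - z j))))
    = -(1 / 2) * (∑ i ∈ Finset.Icc 1 n,
        pd2 (fun x' => Real.exp (-(g 1 * Real.exp (x' 1 + z 1)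
          + ∑ j ∈ Finset.Icc 1 (n - 1),
              (Real.exp (z j - x' j) + g (j + 1) * Real.exp (x' (j + 1) - z j))))) i x)
      + (g 1 * g 2 * Real.exp (x 1 + x 2)
          + ∑ i ∈ Finset.Icc 1 (n - 1), g (i + 1) * Real.exp (x (i + 1) - x i))
        * Real.exp (-(g 1 * Real.exp (x 1 + z 1)
          + ∑ j ∈ Finset.Icc 1 (n - 1),
              (Real.exp (z j - x j) + g (j + 1) * Real.exp (x (j + 1) - z j)))) := by
  classical
  set c : ℝ := g 1 * Real.exp (x 1 + z 1) with hc
  set a : ℕ → ℝ := fun i => Real.exp (z i - x i) with ha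
  set b : ℕ → ℝ := fun i => g (i + 1) * Real.exp (x (i + 1) - z i) with hb
  set Qv : ℝ := Real.exp (-(c + ∑ j ∈ Finset.Icc 1 (n - 1),
      (Real.exp (z j - x j) + g (j + 1) * Real.exp (x (j + 1) - z j)))) with hQv
  have hzsum : (∑ i ∈ Finset.Icc 1 (n - 1),
        pd2 (fun z' => Real.exp (-(g 1 * Real.exp (x 1 + z' 1)
          + ∑ j ∈ Finset.Icc 1 (n - 1),
              (Real.exp (z' j - x j) + g (j + 1) * Real.exp (x (j + 1) - z' j))))) i z)
      = (∑ i ∈ Finset.Icc 1 (n - 1),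
          (((a i + (if i = 1 then c else 0)) - b i) ^ 2
            - ((a i + (if i = 1 then c else 0)) + b i))) * Qv := by
    rw [Finset.sum_mul]
    refine Finset.sum_congr rfl fun i hi => ?_
    obtain ⟨h1, h2⟩ := Finset.mem_Icc.mp hi
    simp only [ha, hb, hc, hQv]
    exact pd2_z n hn g x z i h1 h2
  have hxsum : (∑ i ∈ Finset.Icc 1 n,
        pd2 (fun x' => Real.exp (-(g 1 * Real.exp (x' 1 + z 1)
          + ∑ j ∈ Finset.Icc 1 (n - 1),
              (Real.exp (z j - x' j) + g (j + 1) * Real.exp (x' (j + 1) - z j))))) i x)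
      = (∑ i ∈ Finset.Icc 1 n,
          ((((if i = 1 then c else 0) + (if 2 ≤ i then b (i - 1) else 0))
              - (if i ≤ n - 1 then a i else 0)) ^ 2
            - (((if i = 1 then c else 0) + (if 2 ≤ i then b (i - 1) else 0))
              + (if i ≤ n - 1 then a i else 0)))) * Qv := by
    rw [Finset.sum_mul]
    refine Finset.sum_congr rfl fun i hi => ?_
    obtain ⟨h1, h2⟩ := Finset.mem_Icc.mp hi
    have hb' : (if 2 ≤ i then b (i - 1) else 0)
        = (if 2 ≤ i then g i * Real.exp (x i - z (i - 1)) else 0) := by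
      rcases le_or_gt 2 i with h | h
      · simp only [hb]
        rw [show i - 1 + 1 = i by omega]
      · rw [if_neg (by omega), if_neg (by omega)]
    rw [hb']
    simp only [ha, hc, hQv]
    exact pd2_x n hn g x z i h1 h2
  have hV1 : 2 * g 1 * Real.exp (2 * z 1) = 2 * (c * a 1) := by
    simp only [ha, hc, two_mul, Real.exp_add, Real.exp_sub]
    field_simp
  have hV2 : (∑ i ∈ Finset.Icc 1 (n - 2), g (i + 1) * Real.exp (z (i + 1) - z i))
      = ∑ i ∈ Finset.Icc 1 (n - 2), b i * a (i + 1) := by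
    refine Finset.sum_congr rfl fun i _ => ?_
    simp only [ha, hb, Real.exp_sub]
    field_simp
  have hV3 : g 1 * g 2 * Real.exp (x 1 + x 2) = c * b 1 := by
    simp only [hb, hc]
    norm_num
    rw [Real.exp_add, Real.exp_sub, Real.exp_add]
    field_simp
  have hV4 : (∑ i ∈ Finset.Icc 1 (n - 1), g (i + 1) * Real.exp (x (i + 1) - x i))
      = ∑ i ∈ Finset.Icc 1 (n - 1), a i * b i := by
    refine Finset.sum_congr rfl fun i _ => ?_
    simp only [ha, hb, Real.exp_sub]
    field_simp
  have hkey := key (n - 1) (by omega) a b c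
  rw [show n - 1 + 1 = n by omega, show n - 1 - 1 = n - 2 by omega] at hkey
  rw [hzsum, hxsum, hV1, hV2, hV3, hV4]
  linear_combination Qv * hkey

/-- The kernel `Q(x,z) = exp(−(g_1 e^{x_1+z_1} + Σ_{i=1}^{n−1}(e^{z_i−x_i} + g_{i+1} e^{x_{i+1}−z_i})))`
intertwines the quadratic Hamiltonians of the `C_{n−1}` (in `z`) and `D_n` (in `x`) Toda chains. -/
theorem stmt_5 (n : ℕ) (hn : 2 ≤ n) (g : ℕ → ℝ) :
    let Q : (ℕ → ℝ) → (ℕ → ℝ) → ℝ := fun x z =>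
      Real.exp (-(g 1 * Real.exp (x 1 + z 1)
        + ∑ i ∈ Finset.Icc 1 (n - 1),
            (Real.exp (z i - x i) + g (i + 1) * Real.exp (x (i + 1) - z i))))
    ∀ x z : ℕ → ℝ,
      -(1 / 2) * (∑ i ∈ Finset.Icc 1 (n - 1), pd2 (fun z' => Q x z') i z)
          + (2 * g 1 * Real.exp (2 * z 1)
              + ∑ i ∈ Finset.Icc 1 (n - 2), g (i + 1) * Real.exp (z (i + 1) - z i)) * Q x z
        = -(1 / 2) * (∑ i ∈ Finset.Icc 1 n, pd2 (fun x' => Q x' z) i x)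
          + (g 1 * g 2 * Real.exp (x 1 + x 2)
              + ∑ i ∈ Finset.Icc 1 (n - 1), g (i + 1) * Real.exp (x (i + 1) - x i)) * Q x z := by
  intro Q x z
  exact main' n hn g x z
end

section
/- Let n ≥ 1, g_1 ∈ ℝ, g_2 > 0, g_3,…,g_{n+2} ∈ ℝ, and c = g_1/√(2g_2). Define, for x ∈ ℝ^n and z ∈ ℝ^{n+1} with z_1 < 0, Q(x,z) = ((1−e^{z_1})/(1+e^{z_1}))^{c} · exp(−(√(g_2/2)(e^{x_1+z_1} + e^{x_1−z_1}) + Σ_{i=2}^{n}(g_{i+1} e^{z_i − x_{i−1}} + e^{x_i − z_i}) + g_{n+2} e^{z_{n+1} − x_n})). Then H^{BC_n}(x) Q = H^{I*_{n+1}}(z) Q pointwise on {z_1 < 0}, where H^{BC_n}(x) = −(1/2)Σ_{i=1}^n ∂²/∂x_i² + g_1 e^{x_1} + g_2 e^{2x_1} + Σ_{i=1}^{n−1} g_{i+2} e^{x_{i+1}−x_i}, and H^{I*_{n+1}}(z) = −(1/2)Σ_{i=1}^{n+1} ∂²/∂z_i² − c/(e^{−z_1/2} − e^{z_1/2})² +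 2c(c+1)/(e^{−z_1} − e^{z_1})² + g_3 √(g_2/2)(e^{z_1+z_2} + e^{z_2−z_1}) + Σ_{i=2}^{n} g_{i+2} e^{z_{i+1}−z_i}. -/
open Real Finset

lemma hd_expSum (a b C t : ℝ) :
    HasDerivAt (fun t => C * Real.exp (-(a * Real.exp t + b * Real.exp (-t))))
      (C * Real.exp (-(a * Real.exp t + b * Real.exp (-t))) * (b * Real.exp (-t) - a * Real.exp t)) t := by
  have h1 : HasDerivAt (fun t : ℝ => -(a * Real.exp t + b * Real.exp (-t)))
      (b * Real.exp (-t) - a * Real.exp t) t := by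
    have he : HasDerivAt (fun t : ℝ => Real.exp t) (Real.exp t) t := Real.hasDerivAt_exp t
    have hn : HasDerivAt (fun t : ℝ => Real.exp (-t)) (Real.exp (-t) * (-1)) t :=
      (hasDerivAt_neg t).exp
    have := ((he.const_mul a).add (hn.const_mul b)).neg
    exact this.congr_deriv (by ring)
  have := (h1.exp).const_mul C
  exact this.congr_deriv (by ring)

lemma d2_expSum (a b C t : ℝ) :
    deriv (deriv (fun t => C * Real.exp (-(a * Real.exp t + b * Real.exp (-t))))) t
      = C * Real.exp (-(a * Real.exp t + b * Real.exp (-t))) *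
        ((a * Real.exp t - b * Real.exp (-t)) ^ 2 - (a * Real.exp t + b * Real.exp (-t))) := by
  have hder : deriv (fun t => C * Real.exp (-(a * Real.exp t + b * Real.exp (-t))))
      = fun t => C * Real.exp (-(a * Real.exp t + b * Real.exp (-t))) * (b * Real.exp (-t) - a * Real.exp t) := by
    funext s; exact (hd_expSum a b C s).deriv
  rw [hder]
  have h2 : HasDerivAt (fun t : ℝ => b * Real.exp (-t) - a * Real.exp t)
      (-(b * Real.exp (-t)) - a * Real.exp t) t := by
    have hn : HasDerivAt (fun t : ℝ => Real.exp (-t)) (Real.exp (-t) * (-1)) t :=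
      (hasDerivAt_neg t).exp
    have := (hn.const_mul b).sub ((Real.hasDerivAt_exp t).const_mul a)
    exact this.congr_deriv (by ring)
  exact ((hd_expSum a b C t).mul h2).deriv.trans (by ring)

lemma hd_z1 (c a K : ℝ) {t : ℝ} (ht : t < 0) :
    HasDerivAt (fun t => ((1 - Real.exp t) / (1 + Real.exp t)) ^ c *
        (K * Real.exp (-(a * (Real.exp t + Real.exp (-t))))))
      (((1 - Real.exp t) / (1 + Real.exp t)) ^ c * (K * Real.exp (-(a * (Real.exp t + Real.exp (-t))))) *
        (c * (-2 * Real.exp t / ((1 - Real.exp t) * (1 + Real.exp t))) - a * (Real.exp t - Real.exp (-t)))) t := by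
  have h1 : (0:ℝ) < 1 - Real.exp t := by
    have : Real.exp t < 1 := by rw [← Real.exp_zero]; exact Real.exp_lt_exp.2 ht
    linarith
  have h2 : (0:ℝ) < 1 + Real.exp t := by positivity
  have hrpos : (0:ℝ) < (1 - Real.exp t) / (1 + Real.exp t) := div_pos h1 h2
  have hf : HasDerivAt (fun t : ℝ => 1 - Real.exp t) (-Real.exp t) t := by
    exact ((hasDerivAt_const t (1:ℝ)).sub (Real.hasDerivAt_exp t)).congr_deriv (by ring)
  have hg : HasDerivAt (fun t : ℝ => 1 + Real.exp t) (Real.exp t) t := by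
    exact ((hasDerivAt_const t (1:ℝ)).add (Real.hasDerivAt_exp t)).congr_deriv (by ring)
  have hr : HasDerivAt (fun t : ℝ => (1 - Real.exp t) / (1 + Real.exp t))
      ((-Real.exp t * (1 + Real.exp t) - (1 - Real.exp t) * Real.exp t) / (1 + Real.exp t) ^ 2) t :=
    hf.div hg (ne_of_gt h2)
  have hrc : HasDerivAt (fun t : ℝ => ((1 - Real.exp t) / (1 + Real.exp t)) ^ c)
      (((-Real.exp t * (1 + Real.exp t) - (1 - Real.exp t) * Real.exp t) / (1 + Real.exp t) ^ 2) * c *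
        ((1 - Real.exp t) / (1 + Real.exp t)) ^ (c - 1)) t :=
    hr.rpow_const (Or.inl (ne_of_gt hrpos))
  have hE : HasDerivAt (fun t : ℝ => K * Real.exp (-(a * (Real.exp t + Real.exp (-t)))))
      (K * Real.exp (-(a * (Real.exp t + Real.exp (-t)))) *
        (a * Real.exp (-t) - a * Real.exp t)) t := by
    have h0 := hd_expSum a a K t
    have hfun : (fun t : ℝ => K * Real.exp (-(a * Real.exp t + a * Real.exp (-t))))
        = fun t : ℝ => K * Real.exp (-(a * (Real.exp t + Real.exp (-t)))) := by
      funext s; ring_nf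
    rw [hfun] at h0
    convert h0 using 1
    ring_nf
  have hmul := hrc.mul hE
  refine hmul.congr_deriv ?_
  rw [Real.rpow_sub hrpos, Real.rpow_one]
  have h3 : Real.exp (-(a * (Real.exp t + Real.exp (-t)))) = Real.exp (-(a * Real.exp t + a * Real.exp (-t))) := by ring_nf
  rw [h3]
  field_simp
  ring

lemma d2_z1 (c a K : ℝ) {t : ℝ} (ht : t < 0) :
    deriv (deriv (fun t => ((1 - Real.exp t) / (1 + Real.exp t)) ^ c *
        (K * Real.exp (-(a * (Real.exp t + Real.exp (-t))))))) t
      = ((1 - Real.exp t) / (1 + Real.exp t)) ^ c * (K * Real.exp (-(a * (Real.exp t + Real.exp (-t))))) *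
        ((c * (-2 * Real.exp t / ((1 - Real.exp t) * (1 + Real.exp t))) - a * (Real.exp t - Real.exp (-t))) ^ 2
          + (c * (-2 * Real.exp t * (1 + Real.exp t ^ 2)) / ((1 - Real.exp t) * (1 + Real.exp t)) ^ 2
              - a * (Real.exp t + Real.exp (-t)))) := by
  have h1 : (0:ℝ) < 1 - Real.exp t := by
    have : Real.exp t < 1 := by rw [← Real.exp_zero]; exact Real.exp_lt_exp.2 ht
    linarith
  have h2 : (0:ℝ) < 1 + Real.exp t := by positivity
  have hgne : (1 - Real.exp t) * (1 + Real.exp t) ≠ 0 := by positivity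
  have hψ : HasDerivAt (fun s : ℝ => c * (-2 * Real.exp s / ((1 - Real.exp s) * (1 + Real.exp s)))
        - a * (Real.exp s - Real.exp (-s)))
      (c * (-2 * Real.exp t * (1 + Real.exp t ^ 2)) / ((1 - Real.exp t) * (1 + Real.exp t)) ^ 2
        - a * (Real.exp t + Real.exp (-t))) t := by
    have hnum : HasDerivAt (fun s : ℝ => -2 * Real.exp s) (-2 * Real.exp t) t :=
      (Real.hasDerivAt_exp t).const_mul (-2)
    have hden : HasDerivAt (fun s : ℝ => (1 - Real.exp s) * (1 + Real.exp s))
        ((-Real.exp t) * (1 + Real.exp t) + (1 - Real.exp t) * Real.exp t) t := by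
      have hf : HasDerivAt (fun s : ℝ => 1 - Real.exp s) (-Real.exp t) t := by
        exact ((hasDerivAt_const t (1:ℝ)).sub (Real.hasDerivAt_exp t)).congr_deriv (by ring)
      have hg : HasDerivAt (fun s : ℝ => 1 + Real.exp s) (Real.exp t) t := by
        exact ((hasDerivAt_const t (1:ℝ)).add (Real.hasDerivAt_exp t)).congr_deriv (by ring)
      exact hf.mul hg
    have hq := (hnum.div hden hgne).const_mul c
    have hlin : HasDerivAt (fun s : ℝ => a * (Real.exp s - Real.exp (-s)))
        (a * (Real.exp t + Real.exp (-t))) t := by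
      have hn : HasDerivAt (fun s : ℝ => Real.exp (-s)) (Real.exp (-t) * (-1)) t :=
        (hasDerivAt_neg t).exp
      have := ((Real.hasDerivAt_exp t).sub hn).const_mul a
      exact this.congr_deriv (by ring)
    have := hq.sub hlin
    refine this.congr_deriv ?_
    field_simp
    ring
  have hEq : deriv (fun t => ((1 - Real.exp t) / (1 + Real.exp t)) ^ c *
        (K * Real.exp (-(a * (Real.exp t + Real.exp (-t))))))
      =ᶠ[nhds t] fun s => (((1 - Real.exp s) / (1 + Real.exp s)) ^ c *
        (K * Real.exp (-(a * (Real.exp s + Real.exp (-s)))))) *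
        (c * (-2 * Real.exp s / ((1 - Real.exp s) * (1 + Real.exp s))) - a * (Real.exp s - Real.exp (-s))) := by
    filter_upwards [Iio_mem_nhds ht] with s hs
    exact (hd_z1 c a K hs).deriv
  rw [hEq.deriv_eq]
  exact ((hd_z1 c a K ht).mul hψ).deriv.trans (by ring)

lemma tele (F : ℕ → ℝ) (n : ℕ) (hn : 1 ≤ n) :
    ∑ i ∈ Finset.Icc 2 n, (F i - F (i - 1)) = F n - F 1 := by
  induction n, hn using Nat.le_induction with
  | base => simp
  | succ m hm ih =>
      rw [Finset.sum_Icc_succ_top (by omega), ih]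
      simp

lemma shiftSum (f : ℕ → ℝ) (n : ℕ) (hn : 1 ≤ n) :
    ∑ i ∈ Finset.Icc 2 n, f i = ∑ i ∈ Finset.Icc 1 (n - 1), f (i + 1) := by
  have h2 : Finset.Icc 2 n = Finset.Icc (1 + 1) ((n - 1) + 1) := by congr 1; omega
  rw [h2, ← Finset.map_add_right_Icc 1 (n-1) 1, Finset.sum_map]
  simp [addRightEmbedding]

noncomputable def Af (s2 : ℝ) (z : ℕ → ℝ) (i : ℕ) : ℝ :=
  if i = 1 then s2 * (Real.exp (z 1) + Real.exp (-z 1)) else Real.exp (-z i)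

noncomputable def Bf (g z : ℕ → ℝ) (i : ℕ) : ℝ := g (i + 2) * Real.exp (z (i + 1))

noncomputable def Pf (g x : ℕ → ℝ) (i : ℕ) : ℝ := g (i + 1) * Real.exp (-x (i - 1))

noncomputable def Rf (n : ℕ) (x : ℕ → ℝ) (i : ℕ) : ℝ := if i ≤ n then Real.exp (x i) else 0

noncomputable def uf (x z : ℕ → ℝ) (i : ℕ) : ℝ := Real.exp (x i - z i)

noncomputable def vf (g x z : ℕ → ℝ) (i : ℕ) : ℝ := g (i + 2) * Real.exp (z (i + 1) - x i)

lemma sumSepX (n : ℕ) (hn : 1 ≤ n) (g : ℕ → ℝ) (s2 : ℝ) (x z : ℕ → ℝ) :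
    s2 * (Real.exp (x 1 + z 1) + Real.exp (x 1 - z 1))
      + (∑ i ∈ Finset.Icc 2 n, (g (i + 1) * Real.exp (z i - x (i - 1)) + Real.exp (x i - z i)))
      + g (n + 2) * Real.exp (z (n + 1) - x n)
    = ∑ i ∈ Finset.Icc 1 n, (Af s2 z i * Real.exp (x i) + Bf g z i * Real.exp (-x i)) := by
  have hins : Finset.Icc 1 n = insert 1 (Finset.Icc 2 n) := by ext a; simp; omega
  have h1notin : (1:ℕ) ∉ Finset.Icc 2 n := by simp
  have hA : ∑ i ∈ Finset.Icc 1 n, Af s2 z i * Real.exp (x i)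
      = s2 * (Real.exp (x 1 + z 1) + Real.exp (x 1 - z 1))
        + ∑ i ∈ Finset.Icc 2 n, Real.exp (x i - z i) := by
    rw [hins, Finset.sum_insert h1notin]
    congr 1
    · simp only [Af, if_pos rfl, if_true]
      rw [Real.exp_add, Real.exp_sub, Real.exp_neg]
      field_simp
    · refine Finset.sum_congr rfl fun i hi => ?_
      simp only [Finset.mem_Icc] at hi
      simp only [Af, if_neg (by omega : ¬ i = 1)]
      rw [← Real.exp_add]
      congr 1
      ring
  have hBtop : ∑ i ∈ Finset.Icc 1 n, Bf g z i * Real.exp (-x i)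
      = ∑ i ∈ Finset.Icc 1 (n - 1), Bf g z i * Real.exp (-x i) + Bf g z n * Real.exp (-x n) := by
    have h := Finset.sum_Icc_succ_top (a := 1) (b := n - 1) (by omega)
      (fun i => Bf g z i * Real.exp (-x i))
    rw [show n - 1 + 1 = n by omega] at h
    exact h
  have hshift : ∑ i ∈ Finset.Icc 2 n, g (i + 1) * Real.exp (z i - x (i - 1))
      = ∑ i ∈ Finset.Icc 1 (n - 1), Bf g z i * Real.exp (-x i) := by
    rw [shiftSum (fun i => g (i + 1) * Real.exp (z i - x (i - 1))) n hn]
    refine Finset.sum_congr rfl fun i _ => ?_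
    simp only [Bf, Nat.add_sub_cancel]
    rw [mul_assoc, ← Real.exp_add]
    congr 2
    try ring
  have hlast : g (n + 2) * Real.exp (z (n + 1) - x n) = Bf g z n * Real.exp (-x n) := by
    simp only [Bf]
    rw [mul_assoc, ← Real.exp_add]
    congr 2
    try ring
  have hmid : ∑ i ∈ Finset.Icc 2 n, (g (i + 1) * Real.exp (z i - x (i - 1)) + Real.exp (x i - z i))
      = ∑ i ∈ Finset.Icc 2 n, g (i + 1) * Real.exp (z i - x (i - 1))
        + ∑ i ∈ Finset.Icc 2 n, Real.exp (x i - z i) := Finset.sum_add_distrib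
  rw [hmid, Finset.sum_add_distrib, hA, hBtop, hshift, hlast]
  ring

lemma sumSepZ (n : ℕ) (hn : 1 ≤ n) (g : ℕ → ℝ) (s2 : ℝ) (x z : ℕ → ℝ) :
    s2 * (Real.exp (x 1 + z 1) + Real.exp (x 1 - z 1))
      + (∑ i ∈ Finset.Icc 2 n, (g (i + 1) * Real.exp (z i - x (i - 1)) + Real.exp (x i - z i)))
      + g (n + 2) * Real.exp (z (n + 1) - x n)
    = s2 * Real.exp (x 1) * (Real.exp (z 1) + Real.exp (-z 1))
      + ∑ i ∈ Finset.Icc 2 (n + 1), (Pf g x i * Real.exp (z i) + Rf n x i * Real.exp (-z i)) := by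
  rw [Finset.sum_Icc_succ_top (by omega : 2 ≤ n + 1)]
  have hmid : ∀ i ∈ Finset.Icc 2 n, Pf g x i * Real.exp (z i) + Rf n x i * Real.exp (-z i)
      = g (i + 1) * Real.exp (z i - x (i - 1)) + Real.exp (x i - z i) := by
    intro i hi
    simp only [Finset.mem_Icc] at hi
    simp only [Pf, Rf, if_pos hi.2]
    congr 1
    · rw [mul_assoc, ← Real.exp_add]
      congr 2
      try ring
    · rw [← Real.exp_add]
      congr 1
      try ring
  rw [Finset.sum_congr rfl hmid]
  have htop : Pf g x (n + 1) * Real.exp (z (n + 1)) + Rf n x (n + 1) * Real.exp (-z (n + 1))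
      = g (n + 2) * Real.exp (z (n + 1) - x n) := by
    simp only [Pf, Rf, Nat.add_sub_cancel, if_neg (by omega : ¬ n + 1 ≤ n),
      show n + 1 + 1 = n + 2 by omega]
    rw [zero_mul, add_zero, mul_assoc, ← Real.exp_add]
    congr 2
    try ring
  rw [htop]
  have hfirst : s2 * (Real.exp (x 1 + z 1) + Real.exp (x 1 - z 1))
      = s2 * Real.exp (x 1) * (Real.exp (z 1) + Real.exp (-z 1)) := by
    rw [Real.exp_add, Real.exp_sub, Real.exp_neg]
    field_simp
  rw [hfirst]
  ring

set_option maxHeartbeats 2000000 in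
/-- Recursive intertwining relation between the `BC_n` Toda chain (in `n` variables) and the
specialized Inozemtsev `I*_{n+1}` Toda chain (in `n+1` variables), pointwise on `{z_1 < 0}`. -/
theorem stmt_7 (n : ℕ) (hn : 1 ≤ n) (g : ℕ → ℝ) (hg2 : 0 < g 2)
    (c : ℝ) (hc : c = g 1 / Real.sqrt (2 * g 2)) :
    let Q : (ℕ → ℝ) → (ℕ → ℝ) → ℝ := fun x z =>
      Real.rpow ((1 - Real.exp (z 1)) / (1 + Real.exp (z 1))) c *
      Real.exp (-(Real.sqrt (g 2 / 2) * (Real.exp (x 1 + z 1) + Real.exp (x 1 - z 1))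
        + (∑ i ∈ Finset.Icc 2 n,
            (g (i + 1) * Real.exp (z i - x (i - 1)) + Real.exp (x i - z i)))
        + g (n + 2) * Real.exp (z (n + 1) - x n)))
    ∀ x z : ℕ → ℝ, z 1 < 0 →
      -(1 / 2) * (∑ i ∈ Finset.Icc 1 n, pd2 (fun x' => Q x' z) i x)
          + (g 1 * Real.exp (x 1) + g 2 * Real.exp (2 * x 1)
              + ∑ i ∈ Finset.Icc 1 (n - 1), g (i + 2) * Real.exp (x (i + 1) - x i)) * Q x z
        = -(1 / 2) * (∑ i ∈ Finset.Icc 1 (n + 1), pd2 (fun z' => Q x z') i z)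
          + (-c / (Real.exp (-z 1 / 2) - Real.exp (z 1 / 2)) ^ 2
              + 2 * c * (c + 1) / (Real.exp (-z 1) - Real.exp (z 1)) ^ 2
              + g 3 * Real.sqrt (g 2 / 2) * (Real.exp (z 1 + z 2) + Real.exp (z 2 - z 1))
              + ∑ i ∈ Finset.Icc 2 n, g (i + 2) * Real.exp (z (i + 1) - z i)) * Q x z := by
  intro Q x z hz1
  have hQdef : ∀ a b : ℕ → ℝ, Q a b =
      Real.rpow ((1 - Real.exp (b 1)) / (1 + Real.exp (b 1))) c *
      Real.exp (-(Real.sqrt (g 2 / 2) * (Real.exp (a 1 + b 1) + Real.exp (a 1 - b 1))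
        + (∑ i ∈ Finset.Icc 2 n,
            (g (i + 1) * Real.exp (b i - a (i - 1)) + Real.exp (a i - b i)))
        + g (n + 2) * Real.exp (b (n + 1) - a n))) := fun a b => rfl
  obtain ⟨s2, hs2pos, hs2sq, hs2eq⟩ :
      ∃ s2 : ℝ, 0 < s2 ∧ s2 ^ 2 = g 2 / 2 ∧ Real.sqrt (g 2 / 2) = s2 :=
    ⟨Real.sqrt (g 2 / 2), Real.sqrt_pos.2 (by linarith), Real.sq_sqrt (by linarith), rfl⟩
  rw [hs2eq] at hQdef ⊢
  have hg1 : g 1 = 2 * c * s2 := by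
    have hsq : Real.sqrt (2 * g 2) = 2 * s2 := by
      rw [show (2:ℝ) * g 2 = 2 ^ 2 * (g 2 / 2) by ring,
        Real.sqrt_mul (by norm_num : (0:ℝ) ≤ 2 ^ 2),
        Real.sqrt_sq (by norm_num : (0:ℝ) ≤ 2), hs2eq]
    rw [hc, hsq]
    field_simp
  -- separated forms of Q
  have hQx : ∀ x' : ℕ → ℝ, Q x' z
      = ((1 - Real.exp (z 1)) / (1 + Real.exp (z 1))) ^ c *
        Real.exp (-(∑ i ∈ Finset.Icc 1 n,
          (Af s2 z i * Real.exp (x' i) + Bf g z i * Real.exp (-x' i)))) := by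
    intro x'
    rw [hQdef x' z, Real.rpow_eq_pow, sumSepX n hn g s2 x' z]
  have hQz : ∀ z' : ℕ → ℝ, Q x z'
      = ((1 - Real.exp (z' 1)) / (1 + Real.exp (z' 1))) ^ c *
        Real.exp (-(s2 * Real.exp (x 1) * (Real.exp (z' 1) + Real.exp (-z' 1))
          + ∑ i ∈ Finset.Icc 2 (n + 1),
            (Pf g x i * Real.exp (z' i) + Rf n x i * Real.exp (-z' i)))) := by
    intro z'
    rw [hQdef x z', Real.rpow_eq_pow, sumSepZ n hn g s2 x z']
  -- second derivatives in the x directions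
  have hpd2x : ∀ i ∈ Finset.Icc 1 n, pd2 (fun x' => Q x' z) i x
      = Q x z * ((Af s2 z i * Real.exp (x i) - Bf g z i * Real.exp (-x i)) ^ 2
          - (Af s2 z i * Real.exp (x i) + Bf g z i * Real.exp (-x i))) := by
    intro i hi
    have hfun : (fun t => Q (Function.update x i t) z)
        = fun t => (((1 - Real.exp (z 1)) / (1 + Real.exp (z 1))) ^ c *
            Real.exp (-(∑ j ∈ (Finset.Icc 1 n).erase i,
              (Af s2 z j * Real.exp (x j) + Bf g z j * Real.exp (-x j)))))
          * Real.exp (-(Af s2 z i * Real.exp t + Bf g z i * Real.exp (-t))) := by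
      funext t
      rw [hQx]
      have hsum : ∑ j ∈ Finset.Icc 1 n,
            (Af s2 z j * Real.exp (Function.update x i t j)
              + Bf g z j * Real.exp (-Function.update x i t j))
          = (∑ j ∈ (Finset.Icc 1 n).erase i,
              (Af s2 z j * Real.exp (x j) + Bf g z j * Real.exp (-x j)))
            + (Af s2 z i * Real.exp t + Bf g z i * Real.exp (-t)) := by
        rw [← Finset.sum_erase_add _ _ hi, Function.update_self]
        congr 1
        refine Finset.sum_congr rfl fun j hj => ?_
        rw [Function.update_of_ne (Finset.ne_of_mem_erase hj)]
      rw [hsum, neg_add, Real.exp_add, mul_assoc]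
    simp only [pd2]
    rw [hfun, d2_expSum]
    have hQback : (((1 - Real.exp (z 1)) / (1 + Real.exp (z 1))) ^ c *
          Real.exp (-(∑ j ∈ (Finset.Icc 1 n).erase i,
            (Af s2 z j * Real.exp (x j) + Bf g z j * Real.exp (-x j)))))
        * Real.exp (-(Af s2 z i * Real.exp (x i) + Bf g z i * Real.exp (-x i))) = Q x z := by
      rw [hQx x, ← Finset.sum_erase_add _ _ hi]
      simp only [neg_add, Real.exp_add]
      ring
    rw [hQback]
  -- second derivative in the z 1 direction
  have hpd2z1 : pd2 (fun z' => Q x z') 1 z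
      = Q x z * ((c * (-2 * Real.exp (z 1) / ((1 - Real.exp (z 1)) * (1 + Real.exp (z 1))))
            - s2 * Real.exp (x 1) * (Real.exp (z 1) - Real.exp (-z 1))) ^ 2
          + (c * (-2 * Real.exp (z 1) * (1 + Real.exp (z 1) ^ 2))
              / ((1 - Real.exp (z 1)) * (1 + Real.exp (z 1))) ^ 2
            - s2 * Real.exp (x 1) * (Real.exp (z 1) + Real.exp (-z 1)))) := by
    have hfun : (fun t => Q x (Function.update z 1 t))
        = fun t => ((1 - Real.exp t) / (1 + Real.exp t)) ^ c *
            (Real.exp (-(∑ i ∈ Finset.Icc 2 (n + 1),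
                (Pf g x i * Real.exp (z i) + Rf n x i * Real.exp (-z i))))
              * Real.exp (-(s2 * Real.exp (x 1) * (Real.exp t + Real.exp (-t))))) := by
      funext t
      rw [hQz]
      rw [Function.update_self]
      have hsum : ∑ i ∈ Finset.Icc 2 (n + 1),
            (Pf g x i * Real.exp (Function.update z 1 t i)
              + Rf n x i * Real.exp (-Function.update z 1 t i))
          = ∑ i ∈ Finset.Icc 2 (n + 1),
            (Pf g x i * Real.exp (z i) + Rf n x i * Real.exp (-z i)) := by
        refine Finset.sum_congr rfl fun i hiq => ?_
        simp only [Finset.mem_Icc] at hiq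
        rw [Function.update_of_ne (by omega : i ≠ 1)]
      rw [hsum, neg_add, Real.exp_add]
      ring
    simp only [pd2]
    rw [hfun]
    rw [d2_z1 c (s2 * Real.exp (x 1))
      (Real.exp (-(∑ i ∈ Finset.Icc 2 (n + 1),
        (Pf g x i * Real.exp (z i) + Rf n x i * Real.exp (-z i))))) hz1]
    rw [hQz z, neg_add, Real.exp_add]
    ring
  -- second derivatives in the z directions, i ≥ 2
  have hpd2zi : ∀ i ∈ Finset.Icc 2 (n + 1), pd2 (fun z' => Q x z') i z
      = Q x z * ((Pf g x i * Real.exp (z i) - Rf n x i * Real.exp (-z i)) ^ 2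
          - (Pf g x i * Real.exp (z i) + Rf n x i * Real.exp (-z i))) := by
    intro i hi
    have hi2 : 2 ≤ i := (Finset.mem_Icc.1 hi).1
    have hfun : (fun t => Q x (Function.update z i t))
        = fun t => (((1 - Real.exp (z 1)) / (1 + Real.exp (z 1))) ^ c *
            (Real.exp (-(s2 * Real.exp (x 1) * (Real.exp (z 1) + Real.exp (-z 1))))
              * Real.exp (-(∑ j ∈ (Finset.Icc 2 (n + 1)).erase i,
                  (Pf g x j * Real.exp (z j) + Rf n x j * Real.exp (-z j))))))
          * Real.exp (-(Pf g x i * Real.exp t + Rf n x i * Real.exp (-t))) := by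
      funext t
      rw [hQz]
      rw [Function.update_of_ne (by omega : (1:ℕ) ≠ i)]
      have hsum : ∑ j ∈ Finset.Icc 2 (n + 1),
            (Pf g x j * Real.exp (Function.update z i t j)
              + Rf n x j * Real.exp (-Function.update z i t j))
          = (∑ j ∈ (Finset.Icc 2 (n + 1)).erase i,
              (Pf g x j * Real.exp (z j) + Rf n x j * Real.exp (-z j)))
            + (Pf g x i * Real.exp t + Rf n x i * Real.exp (-t)) := by
        rw [← Finset.sum_erase_add _ _ hi, Function.update_self]
        congr 1
        refine Finset.sum_congr rfl fun j hj => ?_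
        rw [Function.update_of_ne (Finset.ne_of_mem_erase hj)]
      rw [hsum, neg_add, Real.exp_add, neg_add, Real.exp_add]
      ring
    simp only [pd2]
    rw [hfun, d2_expSum]
    have hQback : (((1 - Real.exp (z 1)) / (1 + Real.exp (z 1))) ^ c *
          (Real.exp (-(s2 * Real.exp (x 1) * (Real.exp (z 1) + Real.exp (-z 1))))
            * Real.exp (-(∑ j ∈ (Finset.Icc 2 (n + 1)).erase i,
                (Pf g x j * Real.exp (z j) + Rf n x j * Real.exp (-z j))))))
        * Real.exp (-(Pf g x i * Real.exp (z i) + Rf n x i * Real.exp (-z i))) = Q x z := by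
      rw [hQz z, ← Finset.sum_erase_add _ _ hi]
      simp only [neg_add, Real.exp_add]
      ring
    rw [hQback]
  -- assemble the sums
  have hxsum : ∑ i ∈ Finset.Icc 1 n, pd2 (fun x' => Q x' z) i x
      = Q x z * ∑ i ∈ Finset.Icc 1 n,
          ((Af s2 z i * Real.exp (x i) - Bf g z i * Real.exp (-x i)) ^ 2
            - (Af s2 z i * Real.exp (x i) + Bf g z i * Real.exp (-x i))) := by
    rw [Finset.mul_sum]
    exact Finset.sum_congr rfl hpd2x
  have hins2 : Finset.Icc 1 (n + 1) = insert 1 (Finset.Icc 2 (n + 1)) := by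
    ext a; simp; omega
  have hzsum : ∑ i ∈ Finset.Icc 1 (n + 1), pd2 (fun z' => Q x z') i z
      = Q x z * (((c * (-2 * Real.exp (z 1) / ((1 - Real.exp (z 1)) * (1 + Real.exp (z 1))))
            - s2 * Real.exp (x 1) * (Real.exp (z 1) - Real.exp (-z 1))) ^ 2
          + (c * (-2 * Real.exp (z 1) * (1 + Real.exp (z 1) ^ 2))
              / ((1 - Real.exp (z 1)) * (1 + Real.exp (z 1))) ^ 2
            - s2 * Real.exp (x 1) * (Real.exp (z 1) + Real.exp (-z 1))))
        + ∑ i ∈ Finset.Icc 2 (n + 1),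
            ((Pf g x i * Real.exp (z i) - Rf n x i * Real.exp (-z i)) ^ 2
              - (Pf g x i * Real.exp (z i) + Rf n x i * Real.exp (-z i)))) := by
    rw [hins2, Finset.sum_insert (by simp), hpd2z1, Finset.sum_congr rfl hpd2zi,
      ← Finset.mul_sum, ← mul_add]
  rw [hxsum, hzsum]
  -- the final scalar identity at the special coordinate
  have hzlt : Real.exp (z 1) < 1 := by
    rw [← Real.exp_zero]; exact Real.exp_lt_exp.2 hz1
  have hfin : -(1 / 2) * ((Af s2 z 1 * Real.exp (x 1) - Bf g z 1 * Real.exp (-x 1)) ^ 2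
        - (Af s2 z 1 * Real.exp (x 1) + Bf g z 1 * Real.exp (-x 1)))
      + g 1 * Real.exp (x 1) + g 2 * Real.exp (2 * x 1)
      + (1 / 2) * (vf g x z 1 ^ 2 - vf g x z 1)
      + (1 / 2) * ((c * (-2 * Real.exp (z 1) / ((1 - Real.exp (z 1)) * (1 + Real.exp (z 1))))
            - s2 * Real.exp (x 1) * (Real.exp (z 1) - Real.exp (-z 1))) ^ 2
          + (c * (-2 * Real.exp (z 1) * (1 + Real.exp (z 1) ^ 2))
              / ((1 - Real.exp (z 1)) * (1 + Real.exp (z 1))) ^ 2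
            - s2 * Real.exp (x 1) * (Real.exp (z 1) + Real.exp (-z 1))))
      - (-c / (Real.exp (-z 1 / 2) - Real.exp (z 1 / 2)) ^ 2)
      - 2 * c * (c + 1) / (Real.exp (-z 1) - Real.exp (z 1)) ^ 2
      - g 3 * s2 * (Real.exp (z 1 + z 2) + Real.exp (z 2 - z 1)) = 0 := by
    have hXne := Real.exp_ne_zero (x 1)
    have hHne := Real.exp_ne_zero (z 1 / 2)
    have hz12 : Real.exp (z 1) = Real.exp (z 1 / 2) * Real.exp (z 1 / 2) := by
      rw [← Real.exp_add]; congr 1; ring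
    have hEne := Real.exp_ne_zero (z 1)
    have hEpos := Real.exp_pos (z 1)
    have h1mE : 1 - Real.exp (z 1) ≠ 0 := by intro h; nlinarith [hzlt]
    have h1pE : (1:ℝ) + Real.exp (z 1) ≠ 0 := by positivity
    have hcp1 : (Real.exp (-z 1 / 2) - Real.exp (z 1 / 2)) ^ 2
        = (1 - Real.exp (z 1)) ^ 2 * (Real.exp (z 1))⁻¹ := by
      rw [show -z 1 / 2 = -(z 1 / 2) by ring, Real.exp_neg]
      rw [hz12]
      have h : (Real.exp (z 1 / 2))⁻¹ - Real.exp (z 1 / 2)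
          = (1 - Real.exp (z 1 / 2) * Real.exp (z 1 / 2)) * (Real.exp (z 1 / 2))⁻¹ := by
        field_simp
      rw [h, mul_pow, sq (Real.exp (z 1 / 2))⁻¹, ← mul_inv]
    have hcp2 : (Real.exp (-z 1) - Real.exp (z 1)) ^ 2
        = ((1 - Real.exp (z 1)) * (1 + Real.exp (z 1))) ^ 2 * (Real.exp (z 1) ^ 2)⁻¹ := by
      rw [Real.exp_neg]
      have h : (Real.exp (z 1))⁻¹ - Real.exp (z 1)
          = ((1 - Real.exp (z 1)) * (1 + Real.exp (z 1))) * (Real.exp (z 1))⁻¹ := by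
        field_simp; ring
      rw [h, mul_pow, ← inv_pow]
    rw [hcp1, hcp2]
    simp only [Af, Bf, vf]
    norm_num
    simp only [Real.exp_neg, Real.exp_sub, Real.exp_add, show (2:ℝ) * x 1 = x 1 + x 1 by ring]
    rw [hg1, show g 2 = 2 * s2 ^ 2 by linarith]
    field_simp
    ring
  -- pointwise identifications in the bulk sums
  have hins1 : Finset.Icc 1 n = insert 1 (Finset.Icc 2 n) := by ext a; simp; omega
  have hLmid : ∀ i ∈ Finset.Icc 2 n,
      (Af s2 z i * Real.exp (x i) - Bf g z i * Real.exp (-x i)) ^ 2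
        - (Af s2 z i * Real.exp (x i) + Bf g z i * Real.exp (-x i))
      = (uf x z i - vf g x z i) ^ 2 - (uf x z i + vf g x z i) := by
    intro i hi
    simp only [Finset.mem_Icc] at hi
    have hA : Af s2 z i * Real.exp (x i) = uf x z i := by
      simp only [Af, uf, if_neg (by omega : ¬ i = 1), Real.exp_neg, Real.exp_sub]
      field_simp
    have hB : Bf g z i * Real.exp (-x i) = vf g x z i := by
      simp only [Bf, vf, Real.exp_neg, Real.exp_sub]
      field_simp
      try ring
    rw [hA, hB]
  have hRmid : ∀ i ∈ Finset.Icc 2 n,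
      (Pf g x i * Real.exp (z i) - Rf n x i * Real.exp (-z i)) ^ 2
        - (Pf g x i * Real.exp (z i) + Rf n x i * Real.exp (-z i))
      = (vf g x z (i - 1) - uf x z i) ^ 2 - (vf g x z (i - 1) + uf x z i) := by
    intro i hi
    simp only [Finset.mem_Icc] at hi
    have hP : Pf g x i * Real.exp (z i) = vf g x z (i - 1) := by
      simp only [Pf, vf, show i - 1 + 2 = i + 1 by omega, show i - 1 + 1 = i by omega,
        Real.exp_neg, Real.exp_sub]
      field_simp
      try ring
    have hR : Rf n x i * Real.exp (-z i) = uf x z i := by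
      simp only [Rf, uf, if_pos hi.2, Real.exp_neg, Real.exp_sub]
      field_simp
    rw [hP, hR]
  have hRtop : (Pf g x (n + 1) * Real.exp (z (n + 1)) - Rf n x (n + 1) * Real.exp (-z (n + 1))) ^ 2
        - (Pf g x (n + 1) * Real.exp (z (n + 1)) + Rf n x (n + 1) * Real.exp (-z (n + 1)))
      = vf g x z n ^ 2 - vf g x z n := by
    have hP : Pf g x (n + 1) * Real.exp (z (n + 1)) = vf g x z n := by
      simp only [Pf, vf, Nat.add_sub_cancel, show n + 1 + 1 = n + 2 by omega,
        Real.exp_neg, Real.exp_sub]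
      field_simp
      try ring
    have hR : Rf n x (n + 1) = 0 := by
      simp only [Rf, if_neg (by omega : ¬ n + 1 ≤ n)]
    rw [hP, hR]; ring
  have hpotx : ∑ i ∈ Finset.Icc 1 (n - 1), g (i + 2) * Real.exp (x (i + 1) - x i)
      = ∑ i ∈ Finset.Icc 2 n, vf g x z (i - 1) * uf x z i := by
    rw [shiftSum (fun i => vf g x z (i - 1) * uf x z i) n hn]
    refine Finset.sum_congr rfl fun i _ => ?_
    simp only [Nat.add_sub_cancel, vf, uf, Real.exp_sub]
    field_simp
  have hpotz : ∑ i ∈ Finset.Icc 2 n, g (i + 2) * Real.exp (z (i + 1) - z i)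
      = ∑ i ∈ Finset.Icc 2 n, uf x z i * vf g x z i := by
    refine Finset.sum_congr rfl fun i _ => ?_
    simp only [uf, vf, Real.exp_sub]
    field_simp
  -- telescoping
  have hpt : ∀ i ∈ Finset.Icc 2 n,
      ((uf x z i - vf g x z i) ^ 2 - (uf x z i + vf g x z i))
        - ((vf g x z (i - 1) - uf x z i) ^ 2 - (vf g x z (i - 1) + uf x z i))
        + 2 * (uf x z i * vf g x z i) - 2 * (vf g x z (i - 1) * uf x z i)
      = (vf g x z i ^ 2 - vf g x z i) - (vf g x z (i - 1) ^ 2 - vf g x z (i - 1)) :=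
    fun i _ => by ring
  have htl : ∑ i ∈ Finset.Icc 2 n,
        ((vf g x z i ^ 2 - vf g x z i) - (vf g x z (i - 1) ^ 2 - vf g x z (i - 1)))
      = (vf g x z n ^ 2 - vf g x z n) - (vf g x z 1 ^ 2 - vf g x z 1) := by
    exact tele (fun j => vf g x z j ^ 2 - vf g x z j) n hn
  have hS : (∑ i ∈ Finset.Icc 2 n, ((uf x z i - vf g x z i) ^ 2 - (uf x z i + vf g x z i)))
      - (∑ i ∈ Finset.Icc 2 n,
          ((vf g x z (i - 1) - uf x z i) ^ 2 - (vf g x z (i - 1) + uf x z i)))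
      + 2 * (∑ i ∈ Finset.Icc 2 n, uf x z i * vf g x z i)
      - 2 * (∑ i ∈ Finset.Icc 2 n, vf g x z (i - 1) * uf x z i)
      = (vf g x z n ^ 2 - vf g x z n) - (vf g x z 1 ^ 2 - vf g x z 1) := by
    rw [Finset.mul_sum, Finset.mul_sum, ← Finset.sum_sub_distrib, ← Finset.sum_add_distrib,
      ← Finset.sum_sub_distrib, Finset.sum_congr rfl hpt, htl]
  -- reduce to the scalar identity
  rw [hins1, Finset.sum_insert (by simp), Finset.sum_congr rfl hLmid,
    Finset.sum_Icc_succ_top (by omega : 2 ≤ n + 1), Finset.sum_congr rfl hRmid]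
  beta_reduce
  rw [hRtop, hpotx, hpotz]
  linear_combination (Q x z) * (hfin - (1 / 2) * hS)
end
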